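/- There exists an instance with two groups of agents of sizes 2 and 1, where all three agents have additive valuations over a finite set G of goods, such that no allocation (B₁, B₂) of G to the two groups is EFX for every agent. -/
import Mathlib


open Finset

variable {γ : Type*} [DecidableEq γ]

/-- An allocation is EFX (envy-free up to any positively valued good) for an agent with
valuation `u` whose group receives `mine`, the other group receiving `other`. -/
def EFX (u : Finset γ → ℝ) (mine other : Finset γ) : Prop :=
  ∀ g ∈ other, 0 < u {g} → u (other \ {g}) ≤ u mine

/-- A valuation is additive if the value of a set is the sum of values of its singletons. -/
def AdditiveVal (u : Finset γ → ℝ) : Prop :=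
  ∀ S : Finset γ, u S = ∑ g ∈ S, u {g}

def wq : Fin 3 → Fin 4 → ℤ := ![![2,1,1,0], ![1,1,1,3], ![3,1,1,3]]

def Uq (i : Fin 3) (S : Finset (Fin 4)) : ℤ := ∑ g ∈ S, wq i g

def Ur (i : Fin 3) (S : Finset (Fin 4)) : ℝ := ((Uq i S : ℤ) : ℝ)

def EFXq (u : Finset (Fin 4) → ℤ) (mine other : Finset (Fin 4)) : Prop :=
  ∀ g ∈ other, 0 < u {g} → u (other \ {g}) ≤ u mine

instance (u : Finset (Fin 4) → ℤ) (mine other : Finset (Fin 4)) : Decidable (EFXq u mine other) := by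
  unfold EFXq; infer_instance

lemma Uq_singleton (i : Fin 3) (g : Fin 4) : Uq i {g} = wq i g := by
  simp [Uq]

lemma efx_iff (i : Fin 3) (mine other : Finset (Fin 4)) :
    EFX (Ur i) mine other ↔ EFXq (Uq i) mine other := by
  simp only [EFX, EFXq, Ur, Int.cast_pos, Int.cast_le]

lemma additive_Ur (i : Fin 3) : AdditiveVal (Ur i) := by
  intro S
  simp only [Ur, Uq_singleton, Uq]
  push_cast
  simp

lemma nonneg_Ur (i : Fin 3) (S : Finset (Fin 4)) : 0 ≤ Ur i S := by
  have : (0 : ℤ) ≤ Uq i S := by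
    apply Finset.sum_nonneg
    intro g _
    fin_cases i <;> fin_cases g <;> norm_num [wq]
  unfold Ur
  exact_mod_cast this

/-- For groups of sizes (2,1) and additive valuations, an EFX allocation
does not always exist. -/
theorem additive_2_1_no_EFX :
    ∃ (m : ℕ) (u : Fin 2 → Finset (Fin m) → ℝ) (v : Finset (Fin m) → ℝ),
      (∀ j, AdditiveVal (u j)) ∧ AdditiveVal v ∧
      (∀ j S, 0 ≤ u j S) ∧ (∀ S, 0 ≤ v S) ∧
      ∀ B₁ B₂ : Finset (Fin m), Disjoint B₁ B₂ → B₁ ∪ B₂ = Finset.univ →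
        ¬ ((∀ j, EFX (u j) B₁ B₂) ∧ EFX v B₂ B₁) := by
  refine ⟨4, fun j => Ur ⟨j, by omega⟩, Ur 2,
    fun j => additive_Ur _, additive_Ur _,
    fun j S => nonneg_Ur _ _, fun S => nonneg_Ur _ _, ?_⟩
  intro B₁ B₂ hdisj huniv ⟨h12, h3⟩
  have h0 := (efx_iff 0 B₁ B₂).mp (h12 0)
  have h1 := (efx_iff 1 B₁ B₂).mp (h12 1)
  have h2 := (efx_iff 2 B₂ B₁).mp h3
  clear h12 h3
  revert h0 h1 h2 hdisj huniv
  revert B₁ B₂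
  decide
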